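/- For all integers a, b, L with a, L ≥ 0, ∑_{k=0}^{L} q^{k(k+b)} [L choose k]_q [a choose k+b]_q = [a+L choose b+L]_q. -/

import Mathlib

open Finset

/-- The variable `q`, realized as the generator of the field of rational functions over `ℚ`. -/
noncomputable def qq : RatFunc ℚ := RatFunc.X

/-- `(x)_n = ∏_{j=1}^n (1 - x^j)`. -/
noncomputable def qPoch (x : RatFunc ℚ) (n : ℕ) : RatFunc ℚ :=
  ∏ j ∈ Finset.range n, (1 - x ^ (j + 1))

/-- Gaussian binomial coefficient `[n choose k]_x`, zero unless `0 ≤ k ≤ n`. -/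
noncomputable def qBin (x : RatFunc ℚ) (n k : ℤ) : RatFunc ℚ :=
  if 0 ≤ k ∧ k ≤ n then qPoch x n.toNat / (qPoch x k.toNat * qPoch x (n - k).toNat) else 0

/-- The `q`-trinomial coefficient `[L, b; a]_2` in base `x`. -/
noncomputable def qTri (x : RatFunc ℚ) (L : ℕ) (b a : ℤ) : RatFunc ℚ :=
  ∑ k ∈ Finset.range (L + 1),
    x ^ ((k : ℤ) * (k + b)) * qBin x (L : ℤ) (k : ℤ) * qBin x ((L : ℤ) - k) ((k : ℤ) + a)

/-- The `q`-trinomial `T_n(L, a)`, written in terms of `s = q^{1/2}` (so the base is `s^2`):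
`T_n(L,a) = ∑ s^{r(r-n)} (s²)_L / ((s²)_{(L-a-r)/2} (s²)_{(L+a-r)/2} (s²)_r)`,
the sum over `r ≥ 0` with `L - a - r` even and `r ≤ L - |a|`; zero for `|a| > L`. -/
noncomputable def qT (s : RatFunc ℚ) (n : ℤ) (L : ℕ) (a : ℤ) : RatFunc ℚ :=
  ∑ r ∈ Finset.range (L + 1),
    if Even ((L : ℤ) - a - r) ∧ (r : ℤ) ≤ (L : ℤ) - |a| then
      s ^ ((r : ℤ) * ((r : ℤ) - n)) * qPoch (s ^ 2) L /
        (qPoch (s ^ 2) (((L : ℤ) - a - r) / 2).toNat *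
          qPoch (s ^ 2) (((L : ℤ) + a - r) / 2).toNat * qPoch (s ^ 2) r)
    else 0

/-- The Cartan matrix of the Lie algebra `A_n`. -/
def cartanA (n : ℕ) (i j : Fin n) : ℤ :=
  if i = j then 2 else if |(i : ℤ) - (j : ℤ)| = 1 then -1 else 0

lemma one_sub_pow_ne (j : ℕ) : (1 : RatFunc ℚ) - qq ^ (j+1) ≠ 0 := by
  intro h
  have h1 : qq ^ (j+1) = 1 := by linear_combination -h
  have h2 : (algebraMap (Polynomial ℚ) (RatFunc ℚ)) (Polynomial.X ^ (j+1)) =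
      (algebraMap (Polynomial ℚ) (RatFunc ℚ)) 1 := by
    simpa [qq, RatFunc.algebraMap_X] using h1
  have h3 := IsFractionRing.injective (Polynomial ℚ) (RatFunc ℚ) h2
  simpa using congrArg Polynomial.natDegree h3

lemma qPoch_ne_zero (n : ℕ) : qPoch qq n ≠ 0 :=
  Finset.prod_ne_zero_iff.2 fun j _ => one_sub_pow_ne j

lemma qPoch_succ (x : RatFunc ℚ) (n : ℕ) :
    qPoch x (n+1) = qPoch x n * (1 - x ^ (n+1)) := Finset.prod_range_succ _ _

lemma qBin_nat (n k : ℕ) (h : k ≤ n) :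
    qBin qq (n : ℤ) (k : ℤ) = qPoch qq n / (qPoch qq k * qPoch qq (n - k)) := by
  have : ((n : ℤ) - k).toNat = n - k := by omega
  have h' : (k:ℤ) ≤ (n:ℤ) := by exact_mod_cast h
  simp [qBin, h', this, Int.toNat_natCast]

lemma qBin_zero_of_neg (n k : ℤ) (h : k < 0) : qBin qq n k = 0 := by
  simp [qBin]; omega

lemma qBin_zero_of_gt (n k : ℤ) (h : n < k) : qBin qq n k = 0 := by
  simp [qBin]; omega

lemma qBin_zero_right (n : ℕ) : qBin qq (n : ℤ) 0 = 1 := by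
  rw [show (0:ℤ) = ((0:ℕ):ℤ) by norm_num, qBin_nat n 0 (Nat.zero_le n)]
  simp [qPoch]
  exact (Finset.prod_ne_zero_iff.2 fun j _ => one_sub_pow_ne j)

lemma qBin_diag (n : ℕ) : qBin qq (n : ℤ) (n : ℤ) = 1 := by
  rw [qBin_nat n n le_rfl]
  simp [qPoch]
  exact (Finset.prod_ne_zero_iff.2 fun j _ => one_sub_pow_ne j)

-- genuine Pascal, version 1: [m+1, j] = [m, j-1] + q^j [m, j] for m = i+e+1, j = i+1
lemma pascal1_core (i e : ℕ) :
    qBin qq ((i+e+2 : ℕ) : ℤ) ((i+1 : ℕ) : ℤ)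
      = qBin qq ((i+e+1 : ℕ) : ℤ) ((i : ℕ) : ℤ)
        + qq ^ (i+1) * qBin qq ((i+e+1 : ℕ) : ℤ) ((i+1 : ℕ) : ℤ) := by
  rw [qBin_nat (i+e+2) (i+1) (by omega), qBin_nat (i+e+1) i (by omega),
    qBin_nat (i+e+1) (i+1) (by omega)]
  have h1 : i+e+2 - (i+1) = e+1 := by omega
  have h2 : i+e+1 - i = e+1 := by omega
  have h3 : i+e+1 - (i+1) = e := by omega
  rw [h1, h2, h3, qPoch_succ qq (i+e+1), qPoch_succ qq i, qPoch_succ qq e]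
  have A := qPoch_ne_zero (i+e+1)
  have B := qPoch_ne_zero i
  have C := qPoch_ne_zero e
  have D := one_sub_pow_ne i
  have E := one_sub_pow_ne e
  field_simp
  ring

lemma pascal2_core (i e : ℕ) :
    qBin qq ((i+e+2 : ℕ) : ℤ) ((i+1 : ℕ) : ℤ)
      = qq ^ (e+1) * qBin qq ((i+e+1 : ℕ) : ℤ) ((i : ℕ) : ℤ)
        + qBin qq ((i+e+1 : ℕ) : ℤ) ((i+1 : ℕ) : ℤ) := by
  rw [qBin_nat (i+e+2) (i+1) (by omega), qBin_nat (i+e+1) i (by omega),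
    qBin_nat (i+e+1) (i+1) (by omega)]
  have h1 : i+e+2 - (i+1) = e+1 := by omega
  have h2 : i+e+1 - i = e+1 := by omega
  have h3 : i+e+1 - (i+1) = e := by omega
  rw [h1, h2, h3, qPoch_succ qq (i+e+1), qPoch_succ qq i, qPoch_succ qq e]
  have A := qPoch_ne_zero (i+e+1)
  have B := qPoch_ne_zero i
  have C := qPoch_ne_zero e
  have D := one_sub_pow_ne i
  have E := one_sub_pow_ne e
  field_simp
  ring

lemma hqq : (qq : RatFunc ℚ) ≠ 0 := RatFunc.X_ne_zero

lemma pascal1 (m : ℕ) (j : ℤ) :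
    qBin qq ((m:ℤ)+1) j = qBin qq (m:ℤ) (j-1) + qq ^ j * qBin qq (m:ℤ) j := by
  rcases lt_trichotomy j 0 with hj | hj | hj
  · rw [qBin_zero_of_neg _ _ hj, qBin_zero_of_neg _ _ (by omega),
      qBin_zero_of_neg _ _ hj]; ring
  · subst hj
    rw [qBin_zero_of_neg (m:ℤ) (0-1) (by omega), show (m:ℤ)+1 = ((m+1:ℕ):ℤ) by push_cast; ring,
      qBin_zero_right, show (m:ℤ) = ((m:ℕ):ℤ) by norm_num, qBin_zero_right]
    simp
  · rcases le_or_gt j m with hjm | hjm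
    · -- genuine case
      set i := (j-1).toNat with hi
      set e := m - j.toNat with he
      have hj' : j = ((i+1 : ℕ) : ℤ) := by omega
      have hm : m = i + e + 1 := by omega
      have := pascal1_core i e
      rw [hj', hm]
      rw [show ((i+e+1:ℕ):ℤ)+1 = ((i+e+2:ℕ):ℤ) by push_cast; ring, this,
        show ((i+1:ℕ):ℤ) - 1 = ((i:ℕ):ℤ) by push_cast; ring,
        show (qq ^ (((i+1:ℕ)):ℤ) : RatFunc ℚ) = qq ^ (i+1) by
          rw [← zpow_natCast qq (i+1)]]
    · rcases eq_or_lt_of_le (by omega : (m:ℤ)+1 ≤ j) with hj2 | hj2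
      · rw [← hj2, show (m:ℤ)+1 = ((m+1:ℕ):ℤ) by push_cast; ring, qBin_diag,
          show ((m+1:ℕ):ℤ)-1 = ((m:ℕ):ℤ) by push_cast; ring, qBin_diag,
          qBin_zero_of_gt _ _ (by push_cast; omega)]
        ring
      · rw [qBin_zero_of_gt _ _ (by omega), qBin_zero_of_gt _ _ (by omega),
          qBin_zero_of_gt _ _ (by omega)]
        ring

lemma pascal2 (m j : ℕ) :
    qBin qq ((m:ℤ)+1) (j:ℤ)
      = qq ^ (m+1-j) * qBin qq (m:ℤ) ((j:ℤ)-1) + qBin qq (m:ℤ) (j:ℤ) := by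
  rcases Nat.eq_zero_or_pos j with hj | hj
  · subst hj
    rw [show (m:ℤ)+1 = ((m+1:ℕ):ℤ) by push_cast; ring, show ((0:ℕ):ℤ) = (0:ℤ) by norm_num,
      qBin_zero_right, qBin_zero_right, qBin_zero_of_neg _ _ (by omega)]
    ring
  · rcases le_or_gt j m with hjm | hjm
    · set i := j - 1 with hi
      set e := m - j with he
      have hj' : j = i + 1 := by omega
      have hm : m = i + e + 1 := by omega
      have := pascal2_core i e
      rw [hj', hm, show ((i+e+1:ℕ):ℤ)+1 = ((i+e+2:ℕ):ℤ) by push_cast; ring, this,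
        show (((i+1:ℕ)):ℤ) - 1 = ((i:ℕ):ℤ) by push_cast; ring,
        show i+e+1+1-(i+1) = e+1 by omega]
    · rcases Nat.eq_or_lt_of_le hjm with hj2 | hj2
      · have hj3 : j = m+1 := by omega
        subst hj3
        rw [show (m:ℤ)+1 = ((m+1:ℕ):ℤ) by push_cast; ring, qBin_diag,
          show ((m+1:ℕ):ℤ)-1 = ((m:ℕ):ℤ) by push_cast; ring, qBin_diag,
          qBin_zero_of_gt (m:ℤ) ((m+1:ℕ):ℤ) (by push_cast; omega), show m+1-(m+1) = 0 by omega]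
        ring
      · rw [qBin_zero_of_gt _ _ (by push_cast; omega), qBin_zero_of_gt _ _ (by omega),
          qBin_zero_of_gt _ _ (by omega)]
        ring

theorem stmt14 (a L : ℕ) (b : ℤ) :
    ∑ k ∈ Finset.range (L + 1),
        qq ^ ((k : ℤ) * (k + b)) * qBin qq (L : ℤ) (k : ℤ) * qBin qq (a : ℤ) ((k : ℤ) + b) =
      qBin qq ((a : ℤ) + L) (b + L) := by
  induction L generalizing b with
  | zero =>
    rw [Finset.sum_range_one]
    simp only [Nat.cast_zero, zero_mul, zpow_zero, one_mul, zero_add, add_zero]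
    have h0 : qBin qq (0:ℤ) (0:ℤ) = 1 := by simpa using qBin_zero_right 0
    rw [h0, one_mul]
  | succ L ih =>
    have key : ∀ k ∈ Finset.range (L + 1 + 1),
        qq ^ ((k : ℤ) * (k + b)) * qBin qq ((L+1 : ℕ) : ℤ) (k : ℤ) * qBin qq (a : ℤ) ((k : ℤ) + b)
          = (qq ^ ((k : ℤ) * (k + b)) * qBin qq (L : ℤ) (k : ℤ) * qBin qq (a : ℤ) ((k : ℤ) + b))
            + (qq ^ ((k : ℤ) * (k + b)) * (qq ^ (L+1-k) * qBin qq (L : ℤ) ((k:ℤ) - 1))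
                * qBin qq (a : ℤ) ((k : ℤ) + b)) := by
      intro k _
      rw [show ((L+1:ℕ):ℤ) = (L:ℤ)+1 by push_cast; ring, pascal2 L k]
      ring
    rw [Finset.sum_congr rfl key, Finset.sum_add_distrib]
    -- first sum: last term vanishes
    rw [Finset.sum_range_succ, qBin_zero_of_gt (L:ℤ) ((L+1:ℕ):ℤ) (by push_cast; omega)]
    rw [mul_zero, zero_mul, add_zero, ih b]
    -- second sum: first term vanishes, reindex
    rw [Finset.sum_range_succ', qBin_zero_of_neg (L:ℤ) (((0:ℕ):ℤ) - 1) (by norm_num)]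
    simp only [mul_zero, zero_mul, add_zero, mul_zero]
    have key2 : ∀ k ∈ Finset.range (L + 1),
        qq ^ (((k+1 : ℕ) : ℤ) * ((k+1 : ℕ) + b)) * (qq ^ (L+1-(k+1)) * qBin qq (L : ℤ) (((k+1:ℕ):ℤ) - 1))
            * qBin qq (a : ℤ) (((k+1:ℕ) : ℤ) + b)
          = qq ^ ((b:ℤ)+L+1) * (qq ^ ((k : ℤ) * (k + (b+1))) * qBin qq (L : ℤ) (k : ℤ)
              * qBin qq (a : ℤ) ((k : ℤ) + (b+1))) := by
      intro k hk
      rw [Finset.mem_range] at hk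
      have hk' : k ≤ L := by omega
      rw [show (((k+1:ℕ)):ℤ) = (k:ℤ)+1 by push_cast; ring,
        show ((k:ℤ)+1) - 1 = (k:ℤ) by ring, show ((k:ℤ)+1) + b = (k:ℤ)+(b+1) by ring,
        show L+1-(k+1) = L-k by omega]
      calc qq ^ (((k:ℤ)+1) * ((k:ℤ) + (b+1))) * (qq ^ (L-k) * qBin qq (L:ℤ) (k:ℤ))
              * qBin qq (a:ℤ) ((k:ℤ)+(b+1))
          = (qq ^ (((k:ℤ)+1) * ((k:ℤ) + (b+1))) * qq ^ (((L-k:ℕ)):ℤ))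
              * (qBin qq (L:ℤ) (k:ℤ) * qBin qq (a:ℤ) ((k:ℤ)+(b+1))) := by
            rw [zpow_natCast]; ring
        _ = (qq ^ ((b:ℤ)+L+1) * qq ^ ((k:ℤ)*((k:ℤ)+(b+1))))
              * (qBin qq (L:ℤ) (k:ℤ) * qBin qq (a:ℤ) ((k:ℤ)+(b+1))) := by
            rw [← zpow_add₀ hqq, ← zpow_add₀ hqq]
            congr 1
            push_cast [Nat.cast_sub hk']
            ring
        _ = _ := by ring
    rw [Finset.sum_congr rfl key2, ← Finset.mul_sum, ih (b+1)]
    -- conclude with pascal1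
    have := pascal1 (a+L) (b+L+1)
    rw [show ((a+L:ℕ):ℤ) = (a:ℤ)+L by push_cast; ring] at this
    rw [show (a:ℤ) + ((L+1:ℕ):ℤ) = (a:ℤ)+L+1 by push_cast; ring,
      show b + ((L+1:ℕ):ℤ) = b+L+1 by push_cast; ring, this]
    ring_nf
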